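/- Let τ^R : ℝ/2πℤ → ℝ be smooth, and define M = 1 + max_θ |(τ^R)'(θ)|² and τ_Σ(r,θ) = τ^R(θ) + M(1/r - 1/R) for (r,θ) ∈ (0,R] × ℝ/2πℤ. Then δ(r,θ) := 1 - 2∂τ_Σ/∂r - ((1/r)∂τ_Σ/∂θ)² > 1/r² for all (r,θ), and τ_Σ(R,θ) = τ^R(θ). -/

import Mathlib

/-- Explicit spacelike complete extension of a boundary curve: with
`M = 1 + max_θ |(τ^R)'(θ)|²` and `τ_Σ(r,θ) = τ^R(θ) + M(1/r - 1/R)`, we have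
`δ > 1/r²` for all `0 < r ≤ R`, and `τ_Σ(R,θ) = τ^R(θ)`. -/
theorem btz_explicit_extension (R : ℝ) (hR : 0 < R) (τR τR' : ℝ → ℝ)
    (hper : Function.Periodic τR (2 * Real.pi))
    (hd : ∀ θ : ℝ, HasDerivAt τR (τR' θ) θ)
    (hc : Continuous τR') :
    let M : ℝ := 1 + sSup ((fun θ => |τR' θ|^2) '' Set.Icc (0:ℝ) (2 * Real.pi))
    let τS : ℝ → ℝ → ℝ := fun r θ => τR θ + M * (1/r - 1/R)
    ∀ r ∈ Set.Ioc (0:ℝ) R, ∀ θ : ℝ,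
      HasDerivAt (fun x => τS x θ) (-(M / r^2)) r
      ∧ HasDerivAt (fun y => τS r y) (τR' θ) θ
      ∧ 1/r^2 < 1 - 2 * (-(M / r^2)) - ((1/r) * τR' θ)^2
      ∧ τS R θ = τR θ := by
  intro M τS r hr θ
  obtain ⟨hr0, hrR⟩ := hr
  have hpi : (0:ℝ) < 2 * Real.pi := by positivity
  -- τR' is periodic
  have hp' : Function.Periodic τR' (2 * Real.pi) := by
    intro x
    have h1 : HasDerivAt (fun y => τR (y + 2 * Real.pi)) (τR' (x + 2 * Real.pi)) x := by
      simpa [Function.comp_def] using (hd (x + 2 * Real.pi)).comp x ((hasDerivAt_id x).add_const (2 * Real.pi))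
    have h2 : (fun y => τR (y + 2 * Real.pi)) = τR := funext fun y => hper y
    rw [h2] at h1
    exact h1.unique (hd x)
  -- the sup bound
  have hbdd : BddAbove ((fun θ => |τR' θ|^2) '' Set.Icc (0:ℝ) (2 * Real.pi)) :=
    (isCompact_Icc.image (by continuity)).bddAbove
  have hsup : (τR' θ)^2 ≤ sSup ((fun θ => |τR' θ|^2) '' Set.Icc (0:ℝ) (2 * Real.pi)) := by
    obtain ⟨y, hy, hyeq⟩ := hp'.exists_mem_Ico₀ hpi θ
    calc (τR' θ)^2 = |τR' y|^2 := by rw [hyeq, sq_abs]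
    _ ≤ _ := le_csSup hbdd ⟨y, Set.mem_Icc_of_Ico hy, rfl⟩
  have hM : 1 + (τR' θ)^2 ≤ M := by
    simp only [M]; linarith
  refine ⟨?_, ?_, ?_, ?_⟩
  · have h0 : HasDerivAt (fun x : ℝ => 1/x - 1/R) (-(1/r^2)) r := by
      simpa [one_div] using (hasDerivAt_inv hr0.ne').sub_const (1/R)
    have h1 : HasDerivAt (fun x : ℝ => τR θ + M * (1/x - 1/R)) (M * -(1/r^2)) r :=
      (h0.const_mul M).const_add (τR θ)
    have h2 : M * -(1/r^2) = -(M / r^2) := by ring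
    rw [h2] at h1
    exact h1
  · simpa only [τS] using (hd θ).add_const (M * (1/r - 1/R))
  · have hr2 : (0:ℝ) < r^2 := by positivity
    have h1 : 1 - 2 * (-(M / r^2)) - ((1/r) * τR' θ)^2
        = 1 + (2*M - (τR' θ)^2) / r^2 := by
      field_simp; ring
    rw [h1]
    have h2 : (1:ℝ) < 2*M - (τR' θ)^2 := by nlinarith
    have := (div_lt_div_iff_of_pos_right hr2).mpr h2
    linarith
  · simp [τS]
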